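/- Let q > 1 be real, D = diag(q, −q⁻¹), and U = ((1/[2]_q, √[3]_q/[2]_q), (−√[3]_q/[2]_q, 1/[2]_q)). Then the two matrix products representing the two 3-strand braid realizations (2,3,1,4) and (1,−1,1,3,1,1,1,1,1,1) of the knot 10₁₃₉ have the same trace: trace( D²·(U·D³·Uᵀ)·D·(U·D⁴·Uᵀ) ) = trace( D·(U·D⁻¹·Uᵀ)·D·(U·D³·Uᵀ)·(D·(U·D·Uᵀ))³ ) = −(q⁵ + q⁻⁵)/(q + q⁻¹). -/

import Mathlib

open Matrix

theorem eqfin {a b c d e f g h : ℝ} (h1 : a = e) (h2 : b = f) (h3 : c = g)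
    (h4 : d = h) : !![a,b;c,d] = !![e,f;g,h] := by
  rw [h1, h2, h3, h4]

theorem tfin (a b c d : ℝ) : (!![a,b;c,d])ᵀ = !![a,c;b,d] := by
  ext i j; fin_cases i <;> fin_cases j <;> rfl

/-- The quantum integer `[n]_q = (qⁿ − q⁻ⁿ)/(q − q⁻¹)`. -/
noncomputable def qn (q : ℝ) (n : ℤ) : ℝ := (q ^ n - q ^ (-n)) / (q - q⁻¹)

/-- Integer powers of the diagonal R-matrix: `Dᵃ = diag(qᵃ, (−q⁻¹)ᵃ)`. -/
noncomputable def Dpow (q : ℝ) (a : ℤ) : Matrix (Fin 2) (Fin 2) ℝ :=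
  !![q ^ a, 0; 0, (-q⁻¹) ^ a]

/-- The mixing (Racah) matrix `U`. -/
noncomputable def Umat (q : ℝ) : Matrix (Fin 2) (Fin 2) ℝ :=
  !![1 / qn q 2, Real.sqrt (qn q 3) / qn q 2;
     -Real.sqrt (qn q 3) / qn q 2, 1 / qn q 2]

set_option maxHeartbeats 100000000 in
theorem knot_10_139_two_realizations (q : ℝ) (hq : 1 < q) :
    (Dpow q 2 * (Umat q * Dpow q 3 * (Umat q)ᵀ) * Dpow q 1 *
        (Umat q * Dpow q 4 * (Umat q)ᵀ)).trace =
      -(q ^ (5 : ℤ) + q ^ (-5 : ℤ)) / (q + q⁻¹) ∧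
    (Dpow q 1 * (Umat q * Dpow q (-1) * (Umat q)ᵀ) * Dpow q 1 *
        (Umat q * Dpow q 3 * (Umat q)ᵀ) *
        (Dpow q 1 * (Umat q * Dpow q 1 * (Umat q)ᵀ)) ^ 3).trace =
      -(q ^ (5 : ℤ) + q ^ (-5 : ℤ)) / (q + q⁻¹) := by
  have hq0 : (0:ℝ) < q := lt_trans one_pos hq
  have hqne : q ≠ 0 := ne_of_gt hq0
  have hi0 : (0:ℝ) < q⁻¹ := inv_pos.mpr hq0
  have hd : q - q⁻¹ ≠ 0 := by
    have h1 : q⁻¹ < 1 := by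
      rw [inv_lt_one_iff₀]; right; exact hq
    nlinarith
  have hc : qn q 2 = q + q⁻¹ := by
    unfold qn
    rw [div_eq_iff hd]
    rw [show q ^ (2:ℤ) = q^2 by norm_cast, show q ^ (-2:ℤ) = (q^2)⁻¹ by
      rw [_root_.zpow_neg]; norm_cast]
    field_simp
    ring
  have hcne : q + q⁻¹ ≠ 0 := by positivity
  have h3 : qn q 3 = q^2 + 1 + (q⁻¹)^2 := by
    unfold qn
    rw [div_eq_iff hd]
    rw [show q ^ (3:ℤ) = q^3 by norm_cast, show q ^ (-3:ℤ) = (q^3)⁻¹ by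
      rw [_root_.zpow_neg]; norm_cast]
    field_simp
    ring
  set s := Real.sqrt (qn q 3) with hsdef
  have hs2 : s^2 = q^2 + 1 + (q⁻¹)^2 := by
    rw [hsdef, Real.sq_sqrt, h3]
    rw [h3]; positivity
  have hs4 : s^4 = (q^2 + 1 + (q⁻¹)^2)^2 := by rw [← hs2]; ring
  have hs6 : s^6 = (q^2 + 1 + (q⁻¹)^2)^3 := by rw [← hs2]; ring
  have hs8 : s^8 = (q^2 + 1 + (q⁻¹)^2)^4 := by rw [← hs2]; ring
  have hs10 : s^10 = (q^2 + 1 + (q⁻¹)^2)^5 := by rw [← hs2]; ring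
  have hq5 : q ^ (-5:ℤ) = (q^5)⁻¹ := by rw [_root_.zpow_neg]; norm_cast
  have hq5' : q ^ (5:ℤ) = q^5 := by norm_cast
  have hD2 : Dpow q 2 = !![q^2, 0; 0, (q⁻¹)^2] := by
    unfold Dpow; norm_cast; norm_num [neg_pow]
  have hD1 : Dpow q 1 = !![q, 0; 0, -q⁻¹] := by
    unfold Dpow; norm_cast; norm_num [pow_one]
  have hD3 : Dpow q 3 = !![q^3, 0; 0, -(q⁻¹)^3] := by
    unfold Dpow; norm_cast; norm_num [neg_pow]
  have hD4 : Dpow q 4 = !![q^4, 0; 0, (q⁻¹)^4] := by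
    unfold Dpow; norm_cast; norm_num [neg_pow]
  have hDm1 : Dpow q (-1) = !![q⁻¹, 0; 0, -q] := by
    unfold Dpow; rw [_root_.zpow_neg_one, _root_.zpow_neg_one, inv_neg, inv_inv]
  have hU : Umat q = !![1/(q+q⁻¹), s/(q+q⁻¹); -s/(q+q⁻¹), 1/(q+q⁻¹)] := by
    unfold Umat; rw [hc, ← hsdef]
  constructor
  · rw [hU, hD1, hD2, hD3, hD4, hq5, hq5']
    simp only [tfin, Matrix.mul_fin_two, Matrix.trace_fin_two_of]
    field_simp
    ring_nf
    simp only [hs10, hs8, hs6, hs4, hs2]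
    field_simp
    ring
  · have hP3 : (Dpow q 1 * (Umat q * Dpow q 1 * (Umat q)ᵀ)) ^ 3 = 1 := by
      rw [hU, hD1, pow_succ, pow_succ, pow_one]
      simp only [tfin, Matrix.mul_fin_two, Matrix.one_fin_two]
      have hs3 : s^3 = (q^2 + 1 + (q⁻¹)^2) * s := by rw [← hs2]; ring
      have hs5 : s^5 = (q^2 + 1 + (q⁻¹)^2)^2 * s := by rw [← hs2]; ring
      apply eqfin <;>
        · field_simp
          ring_nf
          simp only [hs6, hs5, hs4, hs3, hs2]
          field_simp
          ring
    rw [hP3, mul_one, hU, hD1, hD3, hDm1, hq5, hq5']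
    simp only [tfin, Matrix.mul_fin_two, Matrix.trace_fin_two_of]
    field_simp
    ring_nf
    simp only [hs10, hs8, hs6, hs4, hs2]
    field_simp
    ring
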